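/- arXiv:1201.0585 — 3 statements merged into one kernel-verified Lean document; each statement's English description precedes it below -/
import Mathlib

section
/- Let M/K be a finite Galois extension of fields with Galois group G, let H ≤ G be a subgroup and L = M^H its fixed field. Then the M-algebra homomorphism M ⊗_K L → ∏_{gH ∈ G/H} M sending m ⊗ l to the tuple (m · g(l))_{gH ∈ G/H} is well defined (g(l) depends only on the coset gH since l is H-fixed) and is an isomorphism of M-algebras. -/
open TensorProduct

/-- Let `M/K` be a finite Galois extension with Galois group `G`, `H ≤ G` a subgroup
and `L = M^H` its fixed field.  The map `M ⊗_K L → ∏_{G/H} M`, `m ⊗ l ↦ (m·g(l))_{gH}`,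
is a well-defined isomorphism of `M`-algebras. -/
theorem tensor_fixedField_iso_pi (K M : Type*) [Field K] [Field M] [Algebra K M]
    [FiniteDimensional K M] [IsGalois K M] (H : Subgroup (M ≃ₐ[K] M)) :
    ∃ e : (M ⊗[K] (IntermediateField.fixedField H)) ≃ₐ[M]
        (((M ≃ₐ[K] M) ⧸ H) → M),
      ∀ (m : M) (l : IntermediateField.fixedField H) (g : M ≃ₐ[K] M),
        e (m ⊗ₜ[K] l) (QuotientGroup.mk g) = m * g (l : M) := by
  classical
  set L := IntermediateField.fixedField H with hLdef
  set G := (M ≃ₐ[K] M)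
  -- elements of `H` fix `L` pointwise
  have hfix : ∀ g : G, g ∈ H → ∀ l : L, g (l : M) = (l : M) := by
    intro g hg l
    exact l.2 ⟨g, hg⟩
  -- the restriction map `G → (L →ₐ[K] M)`
  let res : G → (L →ₐ[K] M) := fun g => (g.toAlgHom.comp L.val)
  have hres : ∀ a b : G, a⁻¹ * b ∈ H → res a = res b := by
    intro a b hab
    ext l
    have := hfix _ hab l
    have h2 : a⁻¹ (b (l : M)) = (l : M) := by
      exact this
    have : b (l : M) = a (l : M) := by
      have h3 : a (a⁻¹ (b (l : M))) = a (l : M) := congrArg a h2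
      rw [← AlgEquiv.mul_apply, mul_inv_cancel] at h3
      simpa using h3
    simp [res, this]
  -- the well-defined map on cosets
  let ev : G ⧸ H → (L →ₐ[K] M) := fun q =>
    Quotient.liftOn' q res (by
      intro a b hab
      exact hres a b ((QuotientGroup.leftRel_apply).mp hab))
  have hev : ∀ g : G, ev (QuotientGroup.mk g) = res g := fun g => rfl
  have hev_inj : Function.Injective ev := by
    intro q q' h
    induction q using Quotient.inductionOn'
    induction q' using Quotient.inductionOn'
    rename_i a b
    rw [hev, hev] at h
    have hmem : a⁻¹ * b ∈ L.fixingSubgroup := by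
      rw [IntermediateField.mem_fixingSubgroup_iff]
      intro x hx
      have h1 := DFunLike.congr_fun h ⟨x, hx⟩
      simp only [res, AlgHom.comp_apply, AlgEquiv.coe_algHom,
        IntermediateField.coe_val] at h1
      rw [AlgEquiv.mul_apply, ← h1, ← AlgEquiv.mul_apply, inv_mul_cancel]
      simp
    rw [IntermediateField.fixingSubgroup_fixedField H] at hmem
    exact Quotient.sound' ((QuotientGroup.leftRel_apply).mpr hmem)
  -- the algebra hom `φ : M ⊗[K] L →ₐ[M] (G ⧸ H → M)`
  let φ : (M ⊗[K] L) →ₐ[M] ((G ⧸ H) → M) :=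
    Algebra.TensorProduct.lift (Algebra.ofId M _) (Pi.algHom K _ (fun q => ev q))
      (fun _ _ => Commute.all _ _)
  have hφ : ∀ (m : M) (l : L) (q : G ⧸ H), φ (m ⊗ₜ[K] l) q = m * ev q l := by
    intro m l q
    simp [φ, Algebra.TensorProduct.lift_tmul, Algebra.ofId_apply, Algebra.algebraMap_eq_smul_one]
  -- cardinality: `|G ⧸ H| = finrank K L`
  have hcard : Fintype.card (G ⧸ H) = Module.finrank K L := by
    have h1 : Fintype.card G = Module.finrank K M := by
      rw [← Nat.card_eq_fintype_card]; exact IsGalois.card_aut_eq_finrank K M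
    have h2 : Module.finrank L M = Fintype.card H := by
      rw [← Nat.card_eq_fintype_card]; exact IntermediateField.finrank_fixedField_eq_card H
    have h3 : Module.finrank K L * Module.finrank L M = Module.finrank K M :=
      Module.finrank_mul_finrank K L M
    have h4 : Nat.card G = Nat.card (G ⧸ H) * Nat.card H :=
      Subgroup.card_eq_card_quotient_mul_card_subgroup H
    have hH : 0 < Fintype.card H := Fintype.card_pos
    simp only [Nat.card_eq_fintype_card] at h4
    have : Fintype.card (G ⧸ H) * Fintype.card H
        = Module.finrank K L * Fintype.card H := by
      rw [← h4, h1, ← h3, h2]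
    exact Nat.eq_of_mul_eq_mul_right hH this
  -- a basis of `L` over `K` indexed by `G ⧸ H`
  let e0 : Fin (Module.finrank K L) ≃ (G ⧸ H) :=
    Fintype.equivOfCardEq (by simp [hcard])
  let b : Module.Basis (G ⧸ H) K L := (Module.finBasis K L).reindex e0
  let B : Module.Basis (G ⧸ H) M (M ⊗[K] L) := Algebra.TensorProduct.basis M b
  -- the matrix of `φ`
  let A : Matrix (G ⧸ H) (G ⧸ H) M := fun q q' => ev q (b q')
  -- rows of `A` are linearly independent by Dedekind's independence of characters
  have hli : LinearIndependent M (fun q : G ⧸ H => (ev q).toLinearMap) :=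
    (linearIndependent_algHom_toLinearMap K L M).comp ev hev_inj
  let β : (L →ₗ[K] M) →ₗ[M] ((G ⧸ H) → M) :=
    { toFun := fun f q' => f (b q')
      map_add' := by intros; ext; simp
      map_smul' := by intros; ext; simp }
  have hβ : LinearMap.ker β = ⊥ := by
    rw [LinearMap.ker_eq_bot']
    intro f hf
    refine b.ext fun q' => ?_
    have := congrFun hf q'
    simpa [β] using this
  have hrows : LinearIndependent M (fun q : G ⧸ H => A q) := by
    have := hli.map' β hβ
    convert this using 1 <;> rfl
  have hA : IsUnit A := Matrix.linearIndependent_rows_iff_isUnit.mp hrows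
  -- `φ` as a linear map equals `mulVec` by `A` composed with coordinates
  have hkey : φ.toLinearMap = A.mulVecLin ∘ₗ (B.equivFun : (M ⊗[K] L) →ₗ[M] _) := by
    refine B.ext fun q' => ?_
    have hBq : B q' = (1 : M) ⊗ₜ[K] (b q') := Algebra.TensorProduct.basis_apply b q'
    have h5 : B.equivFun (B q') = Pi.single q' 1 := by
      ext j
      simp [Module.Basis.equivFun_self, Pi.single_apply, eq_comm]
    ext q
    simp only [LinearMap.comp_apply, AlgHom.toLinearMap_apply, LinearEquiv.coe_coe, h5]
    rw [hBq, hφ]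
    rw [Matrix.mulVecLin_apply, Matrix.mulVec_single_one]; exact one_mul _
  have hinj : Function.Injective φ := by
    have h1 : Function.Injective A.mulVecLin := by
      rw [Matrix.coe_mulVecLin]
      exact Matrix.mulVec_injective_iff_isUnit.mpr hA
    have : Function.Injective φ.toLinearMap := by
      rw [hkey]
      exact h1.comp B.equivFun.injective
    exact this
  have hsurj : Function.Surjective φ := by
    have hfr : Module.finrank M (M ⊗[K] L) = Module.finrank M ((G ⧸ H) → M) := by
      rw [Module.finrank_baseChange, Module.finrank_pi, hcard]
    exact (LinearMap.injective_iff_surjective_of_finrank_eq_finrank hfr).mp hinj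
  refine ⟨AlgEquiv.ofBijective φ ⟨hinj, hsurj⟩, ?_⟩
  intro m l g
  have : (AlgEquiv.ofBijective φ ⟨hinj, hsurj⟩) (m ⊗ₜ[K] l) = φ (m ⊗ₜ[K] l) := rfl
  rw [this, hφ, hev]
  rfl
end

section
/- Let R be a commutative ring, G a finite group acting on R by ring automorphisms, P = R^G the invariant subring, H ≤ G a subgroup, and Q = R^H. Let p be a prime ideal of P and r a prime ideal of R lying over p, and let D(r) = {g ∈ G : g(r) = r} be the decomposition group of r. Then the assignment g ↦ (g • r) ∩ Q induces a well-defined bijection from the set of double cosets H\G/D(r) to the set of prime ideals of Q lying over p. -/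
open Pointwise

/-- The subring of elements of `R` fixed by every element of a subgroup `H` of `G`. -/
def fixedSubring (G : Type*) [Group G] (R : Type*) [CommRing R]
    [MulSemiringAction G R] (H : Subgroup G) : Subring R where
  carrier := {x : R | ∀ g ∈ H, g • x = x}
  zero_mem' := fun g _ => smul_zero g
  one_mem' := fun g _ => smul_one g
  add_mem' := fun {a b} ha hb g hg => by rw [smul_add, ha g hg, hb g hg]
  neg_mem' := fun {a} ha g hg => by rw [smul_neg, ha g hg]
  mul_mem' := fun {a b} ha hb g hg => by rw [smul_mul', ha g hg, hb g hg]

section Aux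
set_option linter.unusedSectionVars false
variable {G : Type*} [Group G] [Finite G] {R : Type*} [CommRing R] [MulSemiringAction G R]

lemma smul_ideal_mono (g : G) {I J : Ideal R} (h : I ≤ J) : g • I ≤ g • J := by
  intro x hx
  rw [Ideal.mem_pointwise_smul_iff_inv_smul_mem] at hx ⊢
  exact h hx

lemma norm_fixed (H : Subgroup G) (x : R) (k : G) (hk : k ∈ H) [Fintype H] :
    k • (∏ h : H, (h : G) • x) = ∏ h : H, (h : G) • x := by
  rw [Finset.smul_prod']
  exact Fintype.prod_bijective (fun h : H => (⟨k, hk⟩ * h : H))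
    (Group.mulLeft_bijective _) _ _ (fun h => (mul_smul k (h : G) x).symm)

lemma le_smul_of_comap_eq (H : Subgroup G) (r r' : Ideal R) (hr : r.IsPrime) (hr' : r'.IsPrime)
    (hcom : r.comap (fixedSubring G R H).subtype = r'.comap (fixedSubring G R H).subtype) :
    ∃ h ∈ H, r' ≤ h • r := by
  classical
  cases nonempty_fintype G
  have hsub : (r' : Set R) ⊆ ⋃ h ∈ ((Finset.univ : Finset H) : Set H), ((h : G)⁻¹ • r : Ideal R) := by
    intro x hx
    have hNfix : ∀ g ∈ H, g • (∏ h : H, (h : G) • x) = ∏ h : H, (h : G) • x :=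
      fun g hg => norm_fixed H x g hg
    have hNr' : (∏ h : H, (h : G) • x) ∈ r' := by
      rw [← Finset.prod_erase_mul _ _ (Finset.mem_univ (1 : H))]
      exact Ideal.mul_mem_left _ _ (by simpa using hx)
    have hNr : (∏ h : H, (h : G) • x) ∈ r := by
      have : (⟨_, hNfix⟩ : fixedSubring G R H) ∈ r'.comap (fixedSubring G R H).subtype := hNr'
      rw [← hcom] at this
      exact this
    haveI := hr
    obtain ⟨h, -, hh⟩ := Ideal.IsPrime.prod_mem_iff.mp hNr
    refine Set.mem_biUnion (Finset.mem_coe.mpr (Finset.mem_univ h)) ?_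
    rw [SetLike.mem_coe, Ideal.mem_pointwise_smul_iff_inv_smul_mem, inv_inv]
    exact hh
  obtain ⟨h, -, hle⟩ := (Ideal.subset_union_prime
    (f := fun h : H => (((h : G))⁻¹ • r : Ideal R)) 1 1
    (fun i _ _ _ => Ideal.IsPrime.smul ((i : G))⁻¹)).mp hsub
  exact ⟨((h : G))⁻¹, H.inv_mem h.2, hle⟩

lemma key_trans (H : Subgroup G) (r r' : Ideal R) (hr : r.IsPrime) (hr' : r'.IsPrime)
    (hcom : r.comap (fixedSubring G R H).subtype = r'.comap (fixedSubring G R H).subtype) :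
    ∃ h ∈ H, h • r = r' := by
  cases nonempty_fintype G
  obtain ⟨h, hhH, hle1⟩ := le_smul_of_comap_eq H r r' hr hr' hcom
  obtain ⟨k, hkH, hle2⟩ := le_smul_of_comap_eq H r' r hr' hr hcom.symm
  set u := h * k with hu
  have hchain : ∀ n : ℕ, r' ≤ u ^ n • r' := by
    intro n
    induction n with
    | zero => simp
    | succ n ih =>
      calc r' ≤ h • r := hle1
        _ ≤ h • (k • r') := smul_ideal_mono h hle2
        _ = u • r' := by rw [mul_smul]
        _ ≤ u • (u ^ n • r') := smul_ideal_mono u ih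
        _ = u ^ (n + 1) • r' := by rw [← mul_smul, ← pow_succ']
  have hur : u • r' ≤ r' := by
    have h1 : u • r' ≤ u • (u ^ (Fintype.card G - 1) • r') :=
      smul_ideal_mono u (hchain _)
    rw [← mul_smul, ← pow_succ', Nat.sub_add_cancel Fintype.card_pos,
      pow_card_eq_one, one_smul] at h1
    exact h1
  refine ⟨h, hhH, le_antisymm ?_ hle1⟩
  calc h • r ≤ h • (k • r') := smul_ideal_mono h hle2
    _ = u • r' := by rw [mul_smul]
    _ ≤ r' := hur

lemma fixed_isIntegral (H : Subgroup G) : Algebra.IsIntegral (fixedSubring G R H) R := by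
  cases nonempty_fintype G
  constructor
  intro x
  have hsub : (↑(prodXSubSMul G R x).coeffs : Set R) ⊆ (fixedSubring G R H : Set R) := by
    intro c hc
    rw [Finset.mem_coe, Polynomial.mem_coeffs_iff] at hc
    obtain ⟨n, _, rfl⟩ := hc
    exact fun g _ => prodXSubSMul.coeff G R x g n
  refine ⟨(prodXSubSMul G R x).toSubring _ hsub,
    (Polynomial.monic_toSubring _ _ _).2 (prodXSubSMul.monic G R x), ?_⟩
  rw [Polynomial.eval₂_eq_eval_map]
  show Polynomial.eval x (Polynomial.map (Subring.subtype (fixedSubring G R H)) _) = 0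
  rw [Polynomial.map_toSubring]
  exact prodXSubSMul.eval G R x

omit [Finite G] in
lemma comap_smul_fixed (H : Subgroup G) {h : G} (hh : h ∈ H) (I : Ideal R) :
    (h • I).comap (fixedSubring G R H).subtype = I.comap (fixedSubring G R H).subtype := by
  ext ⟨x, hx⟩
  simp only [Ideal.mem_comap]
  rw [show (fixedSubring G R H).subtype ⟨x, hx⟩ = x from rfl,
    Ideal.mem_pointwise_smul_iff_inv_smul_mem, hx h⁻¹ (H.inv_mem hh)]

end Aux

theorem fixedSubring_le {G : Type*} [Group G] {R : Type*} [CommRing R]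
    [MulSemiringAction G R] (H : Subgroup G) :
    fixedSubring G R ⊤ ≤ fixedSubring G R H :=
  fun _ hx g _ => hx g trivial

/-- Let `G` be a finite group acting on a commutative ring `R`, `P = R^G`,
`H ≤ G` and `Q = R^H`.  Let `p` be a prime of `P` and `r` a prime of `R` lying
over `p`, with decomposition group `D(r)`.  Then `g ↦ (g • r) ∩ Q` induces a
well-defined bijection from the double cosets `H\G/D(r)` onto the set of primes
of `Q` lying over `p`. -/
theorem doset_bijection_primes_over {G : Type*} [Group G] [Finite G]
    {R : Type*} [CommRing R] [MulSemiringAction G R] (H : Subgroup G)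
    (p : Ideal (fixedSubring G R ⊤)) (hp : p.IsPrime)
    (r : Ideal R) (hr : r.IsPrime)
    (hlie : r.comap (fixedSubring G R ⊤).subtype = p) :
    (∀ g : G,
        ((g • r).comap (fixedSubring G R H).subtype).IsPrime ∧
        ((g • r).comap (fixedSubring G R H).subtype).comap
          (Subring.inclusion (fixedSubring_le H)) = p) ∧
    (∀ q : Ideal (fixedSubring G R H), q.IsPrime →
        q.comap (Subring.inclusion (fixedSubring_le H)) = p →
        ∃ g : G, (g • r).comap (fixedSubring G R H).subtype = q) ∧
    (∀ g g' : G,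
        (g • r).comap (fixedSubring G R H).subtype =
          (g' • r).comap (fixedSubring G R H).subtype ↔
        ∃ h ∈ H, ∃ d ∈ MulAction.stabilizer G r, g' = h * g * d) := by
  haveI := hr
  have hcomp : ((fixedSubring G R H).subtype).comp
      (Subring.inclusion (fixedSubring_le H)) = (fixedSubring G R ⊤).subtype := by
    ext x; rfl
  have hdown : ∀ I : Ideal R,
      (I.comap (fixedSubring G R H).subtype).comap (Subring.inclusion (fixedSubring_le H))
        = I.comap (fixedSubring G R ⊤).subtype := by
    intro I
    rw [Ideal.comap_comap, hcomp]
  refine ⟨fun g => ⟨Ideal.IsPrime.comap _, ?_⟩, ?_, ?_⟩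
  · rw [hdown, comap_smul_fixed ⊤ (Subgroup.mem_top g), hlie]
  · -- surjectivity
    intro q hq hqp
    haveI := hq
    haveI : Algebra.IsIntegral (fixedSubring G R H) R := fixed_isIntegral H
    obtain ⟨r'', -, hprime, hcom⟩ := Ideal.exists_ideal_over_prime_of_isIntegral q
      (⊥ : Ideal R) (by
        intro x hx
        have : (fixedSubring G R H).subtype x = 0 := hx
        have hx0 : x = 0 := Subtype.ext this
        rw [hx0]; exact q.zero_mem)
    have hcom' : r''.comap (fixedSubring G R H).subtype = q := hcom
    obtain ⟨g, -, hg⟩ := key_trans ⊤ r r'' hr hprime (by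
      rw [hlie, ← hdown, hcom', hqp])
    exact ⟨g, by rw [hg, hcom']⟩
  · -- double coset description
    intro g g'
    constructor
    · intro hcom
      obtain ⟨h, hh, hsm⟩ := key_trans H (g • r) (g' • r)
        (Ideal.IsPrime.smul g) (Ideal.IsPrime.smul g') hcom
      refine ⟨h, hh, g⁻¹ * h⁻¹ * g', ?_, by group⟩
      have : (h * g) • r = g' • r := by rw [mul_smul, hsm]
      show (g⁻¹ * h⁻¹ * g') • r = r
      calc (g⁻¹ * h⁻¹ * g') • r = (g⁻¹ * h⁻¹) • (g' • r) := by rw [mul_smul]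
        _ = (g⁻¹ * h⁻¹) • ((h * g) • r) := by rw [this]
        _ = (g⁻¹ * h⁻¹ * (h * g)) • r := by simp only [mul_smul]
        _ = r := by
              have h1 : g⁻¹ * h⁻¹ * (h * g) = 1 := by group
              rw [h1, one_smul]
    · rintro ⟨h, hh, d, hd, rfl⟩
      have hdr : d • r = r := hd
      rw [show (h * g * d) • r = h • (g • r) from by
        rw [mul_smul (h * g) d, hdr, mul_smul], comap_smul_fixed H hh]
end

section
/- Let R be a commutative ring, G a finite group acting on R by ring automorphisms, P = R^G, H ≤ G a subgroup, Q = R^H. Let p be a prime ideal of P and r a prime ideal of R lying over p, with decomposition group D(r) = {g ∈ G : g(r) = r}. Then there is exactly one prime ideal of Q lying over p if and only if G = H · D(r), i.e., every element of G can be written as a product h·d with h ∈ H and d ∈ D(r). -/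
open Pointwise

section Aux

variable {G : Type*} [Group G] [Finite G] {R : Type*} [CommRing R] [MulSemiringAction G R]
  (H : Subgroup G)

lemma fixedSubring.isIntegral : Algebra.IsIntegral (fixedSubring G R H) R := by
  have : Fintype H := Fintype.ofFinite H
  constructor
  intro x
  refine ⟨(prodXSubSMul H R x).toSubring (fixedSubring G R H) ?_, ?_, ?_⟩
  · intro c hc
    show ∀ g ∈ H, g • c = c
    intro g hg
    obtain ⟨n, _, hn⟩ := Polynomial.mem_coeffs_iff.1 hc
    have := prodXSubSMul.coeff H R x ⟨g, hg⟩ n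
    rw [hn]
    exact this
  · exact (Polynomial.monic_toSubring _ _ _).2 (prodXSubSMul.monic H R x)
  · rw [Polynomial.eval₂_eq_eval_map]
    have : algebraMap (fixedSubring G R H) R = (fixedSubring G R H).subtype :=
      Algebra.algebraMap_ofSubring _
    rw [this]
    exact (congrArg (Polynomial.eval x) (Polynomial.map_toSubring _ _ _)).trans
      (prodXSubSMul.eval H R x)

/-- comap of a pointwise `g`-translate, for `g ∈ H`, agrees on the fixed subring. -/
lemma fixedSubring.comap_smul {g : G} (hg : g ∈ H) (r : Ideal R) :
    (g • r).comap (fixedSubring G R H).subtype = r.comap (fixedSubring G R H).subtype := by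
  ext x
  rw [Ideal.mem_comap, Ideal.mem_comap, Ideal.mem_pointwise_smul_iff_inv_smul_mem]
  show g⁻¹ • (x : R) ∈ r ↔ (x : R) ∈ r
  rw [x.2 g⁻¹ (inv_mem hg)]

lemma fixedSubring.exists_smul_eq {r r' : Ideal R} (hr : r.IsPrime) (hr' : r'.IsPrime)
    (h : r.comap (fixedSubring G R H).subtype = r'.comap (fixedSubring G R H).subtype) :
    ∃ g ∈ H, g • r = r' := by
  classical
  have : Fintype H := Fintype.ofFinite H
  haveI := hr
  haveI := hr'
  -- r' is covered by the H-translates of r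
  have hcover : (r' : Set R) ⊆ ⋃ h ∈ ((Finset.univ : Finset H) : Set H),
      ((((h : G) • r : Ideal R)) : Set R) := by
    intro x hx
    set y : R := ∏ h : H, (h : G) • x with hy
    have hyfix : y ∈ fixedSubring G R H := by
      intro g hg
      rw [hy, Finset.smul_prod']
      exact Fintype.prod_bijective (fun h : H => (⟨g, hg⟩ : H) * h)
        (Group.mulLeft_bijective _) _ _ (fun h => by rw [smul_smul]; rfl)
    have hyr' : y ∈ r' := by
      rw [hy, ← Finset.prod_erase_mul Finset.univ _ (Finset.mem_univ (1 : H))]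
      exact Ideal.mul_mem_left _ _ (by simpa using hx)
    have hyr : y ∈ r := by
      have hm : (⟨y, hyfix⟩ : fixedSubring G R H) ∈
          r'.comap (fixedSubring G R H).subtype := hyr'
      rw [← h] at hm
      exact hm
    rw [hy, Ideal.IsPrime.prod_mem_iff] at hyr
    obtain ⟨h0, _, hh0⟩ := hyr
    refine Set.mem_biUnion (Finset.mem_coe.2 (Finset.mem_univ h0⁻¹)) ?_
    rw [SetLike.mem_coe, Ideal.mem_pointwise_smul_iff_inv_smul_mem]
    simpa using hh0
  rw [Ideal.subset_union_prime (1 : H) (1 : H) (fun i _ _ _ => inferInstance)] at hcover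
  obtain ⟨k, _, hk⟩ := hcover
  refine ⟨(k : G), k.2, ?_⟩
  by_contra hne
  have hlt : r' < (k : G) • r := lt_of_le_of_ne hk (fun e => hne e.symm)
  obtain ⟨x, hxk, hxr'⟩ := SetLike.exists_of_lt hlt
  have := fixedSubring.isIntegral (G := G) (R := R) H
  have hcomap : r'.comap (algebraMap (fixedSubring G R H) R) <
      ((k : G) • r).comap (algebraMap (fixedSubring G R H) R) :=
    Ideal.comap_lt_comap_of_integral_mem_sdiff hk ⟨hxk, hxr'⟩
      (Algebra.IsIntegral.isIntegral x)
  rw [Algebra.algebraMap_ofSubring, fixedSubring.comap_smul H k.2, ← h] at hcomap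
  exact lt_irrefl _ hcomap

lemma fixedSubring.exists_prime_over (q : Ideal (fixedSubring G R H)) (hq : q.IsPrime) :
    ∃ s : Ideal R, s.IsPrime ∧ s.comap (fixedSubring G R H).subtype = q := by
  have := fixedSubring.isIntegral (G := G) (R := R) H
  haveI := hq
  obtain ⟨s, _, hs, hs'⟩ := Ideal.exists_ideal_over_prime_of_isIntegral (S := R) q ⊥ (by
    intro x hx
    have hx0 : (algebraMap (fixedSubring G R H) R) x = 0 := by simpa using hx
    rw [Algebra.algebraMap_ofSubring] at hx0
    have : x = 0 := Subtype.ext (by simpa using hx0)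
    simp [this])
  exact ⟨s, hs, by rwa [Algebra.algebraMap_ofSubring] at hs'⟩

lemma fixedSubring.comap_comap (s : Ideal R) :
    (s.comap (fixedSubring G R H).subtype).comap
        (Subring.inclusion (fixedSubring_le H)) =
      s.comap (fixedSubring G R ⊤).subtype := by
  rw [Ideal.comap_comap]
  congr 1

end Aux

/-- With `G` finite acting on `R`, `P = R^G`, `Q = R^H`, `p` a prime of `P` and `r` a
prime of `R` lying over `p` with decomposition group `D(r)`: there is exactly one
prime of `Q` lying over `p` if and only if `G = H · D(r)`. -/
theorem unique_prime_over_iff_decomposition {G : Type*} [Group G] [Finite G]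
    {R : Type*} [CommRing R] [MulSemiringAction G R] (H : Subgroup G)
    (p : Ideal (fixedSubring G R ⊤)) (hp : p.IsPrime)
    (r : Ideal R) (hr : r.IsPrime)
    (hlie : r.comap (fixedSubring G R ⊤).subtype = p) :
    (∃! q : Ideal (fixedSubring G R H), q.IsPrime ∧
        q.comap (Subring.inclusion (fixedSubring_le H)) = p) ↔
    (∀ g : G, ∃ h ∈ H, ∃ d ∈ MulAction.stabilizer G r, g = h * d) := by
  haveI := hr
  constructor
  · rintro ⟨q, -, huniq⟩ g
    have hq0 : r.comap (fixedSubring G R H).subtype = q :=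
      huniq _ ⟨inferInstance, by rw [fixedSubring.comap_comap, hlie]⟩
    have hq1 : (g • r).comap (fixedSubring G R H).subtype = q :=
      huniq _ ⟨inferInstance, by
        rw [fixedSubring.comap_comap, fixedSubring.comap_smul ⊤ (Subgroup.mem_top g), hlie]⟩
    obtain ⟨h, hh, hhg⟩ := fixedSubring.exists_smul_eq H inferInstance hr
      (by rw [hq1, hq0])
    rw [smul_smul] at hhg
    exact ⟨h⁻¹, inv_mem hh, h * g, hhg, by group⟩
  · intro hG
    refine ⟨r.comap (fixedSubring G R H).subtype,
      ⟨inferInstance, by rw [fixedSubring.comap_comap, hlie]⟩, ?_⟩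
    rintro q' ⟨hq', hq'p⟩
    obtain ⟨s, hs, hsq⟩ := fixedSubring.exists_prime_over H q' hq'
    haveI := hs
    have hsp : r.comap (fixedSubring G R ⊤).subtype =
        s.comap (fixedSubring G R ⊤).subtype := by
      rw [hlie, ← fixedSubring.comap_comap, hsq, hq'p]
    obtain ⟨g, -, hg⟩ := fixedSubring.exists_smul_eq ⊤ hr hs hsp
    obtain ⟨h, hh, d, hd, rfl⟩ := hG g
    rw [← hsq, ← hg, mul_smul, hd, fixedSubring.comap_smul H hh]
end
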